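/- Among all constant symmetric positive definite metrics M on a domain of volume vol satisfying the complexity constraint sqrt(det M) · vol = C, the metric M = (C/vol)^{2/d} det(H)^{−1/d} H minimizes trace(M^{−1} H), where H is a fixed symmetric positive definite matrix; the minimal value is d (C/vol)^{−2/d} det(H)^{1/d}. -/

import Mathlib

open Matrix

lemma myPosDefConj {n : Type*} [Fintype n] [DecidableEq n] {A B : Matrix n n ℝ}
    (hA : A.PosDef) (hB : IsUnit B.det) : (Bᴴ * A * B).PosDef := by
  refine Matrix.PosDef.of_dotProduct_mulVec_pos (Matrix.isHermitian_conjTranspose_mul_mul B hA.1) fun x hx => ?_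
  have hx' : B *ᵥ x ≠ 0 := by
    intro h
    apply hx
    have := congrArg (fun v => B⁻¹ *ᵥ v) h
    simpa [Matrix.mulVec_mulVec, Matrix.nonsing_inv_mul B hB] using this
  simpa only [star_mulVec, dotProduct_mulVec, vecMul_vecMul] using hA.dotProduct_mulVec_pos hx'

lemma myTraceEqSumEigenvalues {d : ℕ} {A : Matrix (Fin d) (Fin d) ℝ}
    (hA : A.IsHermitian) : A.trace = ∑ i, hA.eigenvalues i := by
  conv_lhs => rw [hA.spectral_theorem, Unitary.conjStarAlgAut_apply]
  rw [Matrix.trace_mul_comm, ← Matrix.mul_assoc,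
    (Matrix.mem_unitaryGroup_iff').mp (Matrix.IsHermitian.eigenvectorUnitary hA).2, one_mul,
    Matrix.trace_diagonal]
  simp

lemma myAMGM {d : ℕ} {S : Matrix (Fin d) (Fin d) ℝ} (hd : 1 ≤ d) (hS : S.PosDef) :
    (d : ℝ) * S.det ^ ((1:ℝ)/d) ≤ S.trace := by
  have hd0 : (d : ℝ) ≠ 0 := Nat.cast_ne_zero.mpr (by omega)
  have hpos : ∀ i, 0 < hS.isHermitian.eigenvalues i := hS.eigenvalues_pos
  have hdet : S.det = ∏ i, hS.isHermitian.eigenvalues i := by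
    simpa using hS.isHermitian.det_eq_prod_eigenvalues
  have htr : S.trace = ∑ i, hS.isHermitian.eigenvalues i := myTraceEqSumEigenvalues _
  have hw : ∑ _i : Fin d, (1:ℝ)/d = 1 := by
    simp [Finset.sum_const, Finset.card_univ]
    field_simp
  have h := Real.geom_mean_le_arith_mean_weighted Finset.univ (fun _ => (1:ℝ)/d)
    hS.isHermitian.eigenvalues (fun _ _ => by positivity) hw (fun i _ => (hpos i).le)
  have h' : (∏ i, hS.isHermitian.eigenvalues i) ^ ((1:ℝ)/d)
      ≤ ∑ i : Fin d, (1:ℝ)/d * hS.isHermitian.eigenvalues i := by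
    rw [← Real.finset_prod_rpow Finset.univ _ (fun i _ => (hpos i).le) ((1:ℝ)/d)]
    exact h
  rw [hdet, htr]
  calc (d : ℝ) * (∏ i, hS.isHermitian.eigenvalues i) ^ ((1:ℝ)/d)
      ≤ (d : ℝ) * ∑ i : Fin d, (1:ℝ)/d * hS.isHermitian.eigenvalues i := by
        exact mul_le_mul_of_nonneg_left h' (by positivity)
    _ = ∑ i, hS.isHermitian.eigenvalues i := by
        rw [Finset.mul_sum]
        congr 1; ext i; field_simp

/-- Constant-data optimal metric: `M₀ = (C/vol)^{2/d} det(H)^{-1/d} H` satisfies the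
complexity constraint `√(det M₀) = C/vol` and minimizes `trace(M⁻¹ H)` among all SPD
metrics satisfying this constraint, with minimal value `d (C/vol)^{-2/d} det(H)^{1/d}`. -/
theorem optimal_constant_metric
    {d : ℕ} (hd : 1 ≤ d) (H : Matrix (Fin d) (Fin d) ℝ) (hH : H.PosDef)
    (C vol : ℝ) (hC : 0 < C) (hvol : 0 < vol) :
    Real.sqrt ((((C / vol) ^ ((2:ℝ)/d) * H.det ^ (-(1:ℝ)/d)) • H).det) = C / vol ∧
    (((((C / vol) ^ ((2:ℝ)/d) * H.det ^ (-(1:ℝ)/d)) • H)⁻¹ * H).trace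
        = (d : ℝ) * (C / vol) ^ (-(2:ℝ)/d) * H.det ^ ((1:ℝ)/d)) ∧
    (∀ M : Matrix (Fin d) (Fin d) ℝ, M.PosDef → Real.sqrt M.det = C / vol →
      (d : ℝ) * (C / vol) ^ (-(2:ℝ)/d) * H.det ^ ((1:ℝ)/d) ≤ (M⁻¹ * H).trace) := by
  have hd0 : (d : ℝ) ≠ 0 := Nat.cast_ne_zero.mpr (by omega)
  set a : ℝ := C / vol with ha_def
  have ha : 0 < a := div_pos hC hvol
  have hdetH : 0 < H.det := hH.det_pos
  set c : ℝ := a ^ ((2:ℝ)/d) * H.det ^ (-(1:ℝ)/d) with hc_def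
  have hc : 0 < c := mul_pos (Real.rpow_pos_of_pos ha _) (Real.rpow_pos_of_pos hdetH _)
  -- c ^ d = a^2 / det H
  have hcd : c ^ d = a ^ 2 * H.det⁻¹ := by
    rw [← Real.rpow_natCast c d, hc_def, Real.mul_rpow (by positivity) (by positivity),
      ← Real.rpow_mul ha.le, ← Real.rpow_mul hdetH.le]
    have h1 : (2:ℝ)/d * d = 2 := by field_simp
    have h2 : (-(1:ℝ)/d) * d = -1 := by field_simp
    rw [h1, h2, Real.rpow_two, Real.rpow_neg_one]
  have hdet_smul : ((c • H).det) = a ^ 2 := by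
    rw [Matrix.det_smul, Fintype.card_fin, hcd]
    field_simp
  refine ⟨?_, ?_, ?_⟩
  · rw [hdet_smul, Real.sqrt_sq ha.le]
  · -- trace of (c•H)⁻¹ * H
    have hHdetUnit : IsUnit H.det := (ne_of_gt hdetH).isUnit
    have hinv : (c • H)⁻¹ = c⁻¹ • H⁻¹ := by
      apply Matrix.inv_eq_right_inv
      rw [Matrix.smul_mul, Matrix.mul_smul, smul_smul, mul_inv_cancel₀ (ne_of_gt hc),
        Matrix.mul_nonsing_inv H hHdetUnit, one_smul]
    rw [hinv, Matrix.smul_mul, Matrix.nonsing_inv_mul H hHdetUnit, Matrix.trace_smul,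
      Matrix.trace_one, smul_eq_mul]
    have hcinv : c⁻¹ = a ^ (-(2:ℝ)/d) * H.det ^ ((1:ℝ)/d) := by
      rw [hc_def, mul_inv, ← Real.rpow_neg ha.le, ← Real.rpow_neg hdetH.le]
      ring_nf
    rw [hcinv, Fintype.card_fin]; ring
  · intro M hM hsq
    have hdetM : M.det = a ^ 2 := by
      rw [← Real.sq_sqrt hM.det_pos.le, hsq]
    have hMinv : M⁻¹.PosDef := hM.inv
    open scoped MatrixOrder in
    set R : Matrix (Fin d) (Fin d) ℝ := CFC.sqrt M⁻¹ with hR_def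
    open scoped MatrixOrder in
    have hRps : R.PosSemidef := Matrix.nonneg_iff_posSemidef.mp (CFC.sqrt_nonneg _)
    have hRH : Rᴴ = R := hRps.isHermitian
    open scoped MatrixOrder in
    have hRR : R * R = M⁻¹ :=
      CFC.sqrt_mul_sqrt_self M⁻¹ (Matrix.nonneg_iff_posSemidef.mpr hMinv.posSemidef)
    have hdetMinv : M⁻¹.det = (a ^ 2)⁻¹ := by
      rw [Matrix.det_nonsing_inv, hdetM, Ring.inverse_eq_inv]
    have hdetR : IsUnit R.det := by
      have h2 : R.det * R.det = M⁻¹.det := by rw [← Matrix.det_mul, hRR]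
      have : R.det ≠ 0 := by
        intro h
        rw [h, mul_zero] at h2
        rw [hdetMinv] at h2
        exact (by positivity : (0:ℝ) < (a^2)⁻¹).ne h2
      exact this.isUnit
    have hS : (R * H * R).PosDef := by
      have := myPosDefConj hH hdetR
      rwa [hRH] at this
    have hdetS : (R * H * R).det = (a ^ 2)⁻¹ * H.det := by
      rw [Matrix.det_mul, Matrix.det_mul, ← hdetMinv, ← hRR, Matrix.det_mul]
      ring
    have htrS : (M⁻¹ * H).trace = (R * H * R).trace := by
      rw [← hRR]
      exact (Matrix.trace_mul_cycle R H R).symm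
    have key := myAMGM hd hS
    rw [hdetS] at key
    rw [htrS]
    refine le_trans (le_of_eq ?_) key
    have e1 : ((a ^ 2)⁻¹ * H.det) ^ ((1:ℝ)/d)
        = a ^ (-(2:ℝ)/d) * H.det ^ ((1:ℝ)/d) := by
      rw [Real.mul_rpow (by positivity) hdetH.le]
      congr 1
      rw [← Real.rpow_two, ← Real.rpow_neg ha.le, ← Real.rpow_mul ha.le]
      ring_nf
    rw [e1]; ring
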